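/- For every integer k ≥ 1 there exists a string over a binary alphabet whose novLZ3 parsing has size k and whose novLZ parsing has size 2k − 1 (i.e., Znon3 = k and Znon = 2k − 1). -/

import Mathlib

attribute [local instance] Classical.propDecidable

/-- `PermOv s i ℓ` : the substring of `s` of length `ℓ` starting at 0-indexed position `i`
has an occurrence starting at some earlier position `j < i` (possibly overlapping it). -/
def PermOv {α : Type*} (s : List α) (i ℓ : ℕ) : Prop :=
  ∃ j < i, (s.drop j).take ℓ = (s.drop i).take ℓ

/-- `PermNov s i ℓ` : the substring of `s` of length `ℓ` starting at 0-indexed position `i`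
has an occurrence starting at some position `j` with `j + ℓ ≤ i` (not overlapping it). -/
def PermNov {α : Type*} (s : List α) (i ℓ : ℕ) : Prop :=
  ∃ j, j + ℓ ≤ i ∧ (s.drop j).take ℓ = (s.drop i).take ℓ

/-- `PermOv3 s i ℓ` : the substring of `s` of length `ℓ - 1` starting at 0-indexed position `i`
(i.e. the phrase of length `ℓ` starting at `i` minus its last letter) has an occurrence
starting at some earlier position `j < i` (possibly overlapping). -/
def PermOv3 {α : Type*} (s : List α) (i ℓ : ℕ) : Prop :=
  ∃ j < i, (s.drop j).take (ℓ - 1) = (s.drop i).take (ℓ - 1)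

/-- `PermNov3 s i ℓ` : the substring of `s` of length `ℓ - 1` starting at 0-indexed position `i`
has an occurrence starting at some position `j` with `j + (ℓ - 1) ≤ i` (so this occurrence
ends before position `i`). -/
def PermNov3 {α : Type*} (s : List α) (i ℓ : ℕ) : Prop :=
  ∃ j, j + (ℓ - 1) ≤ i ∧ (s.drop j).take (ℓ - 1) = (s.drop i).take (ℓ - 1)

/-- Length of the greedy phrase starting at 0-indexed position `i`: the largest
`ℓ ≤ |s| - i` permitted by `P`, or `1` (a single letter) if no length is permitted. -/
noncomputable def phraseLen {α : Type*} (P : List α → ℕ → ℕ → Prop) (s : List α) (i : ℕ) : ℕ :=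
  max 1 (Nat.findGreatest (fun ℓ => P s i ℓ) (s.length - i))

/-- The list of phrases of the greedy parsing (w.r.t. the permission predicate `P`)
of the suffix of `s` starting at 0-indexed position `i`. -/
noncomputable def phrasesFrom {α : Type*} (P : List α → ℕ → ℕ → Prop) (s : List α) (i : ℕ) :
    List (List α) :=
  if _h : i < s.length then
    (s.drop i).take (phraseLen P s i) :: phrasesFrom P s (i + phraseLen P s i)
  else []
  termination_by s.length - i
  decreasing_by
    have h1 : 1 ≤ phraseLen P s i := by unfold phraseLen; exact Nat.le_max_left _ _
    omega

/-- The LZ parsing of `s` (phrases may overlap their earlier occurrences). -/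
noncomputable def lzPhrases {α : Type*} (s : List α) : List (List α) := phrasesFrom PermOv s 0
/-- The novLZ parsing of `s` (earlier occurrences may not overlap the phrases). -/
noncomputable def novlzPhrases {α : Type*} (s : List α) : List (List α) := phrasesFrom PermNov s 0
/-- The LZ3 parsing of `s`. -/
noncomputable def lz3Phrases {α : Type*} (s : List α) : List (List α) := phrasesFrom PermOv3 s 0
/-- The novLZ3 parsing of `s`. -/
noncomputable def novlz3Phrases {α : Type*} (s : List α) : List (List α) := phrasesFrom PermNov3 s 0

/-- `Zov`: the size (number of phrases) of the LZ parsing of `s`. -/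
noncomputable def zOv {α : Type*} (s : List α) : ℕ := (lzPhrases s).length
/-- `Znon`: the size of the novLZ parsing of `s`. -/
noncomputable def zNov {α : Type*} (s : List α) : ℕ := (novlzPhrases s).length
/-- `Zov₃`: the size of the LZ3 parsing of `s`. -/
noncomputable def zOv3 {α : Type*} (s : List α) : ℕ := (lz3Phrases s).length
/-- `Znon₃`: the size of the novLZ3 parsing of `s`. -/
noncomputable def zNov3 {α : Type*} (s : List α) : ℕ := (novlz3Phrases s).length

/-- `ts` is an LZ-type parsing of `s`: a decomposition of `s` into nonempty strings such that
each `tᵢ` is a single letter or occurs in `s[1..|t₁⋯tᵢ|-1]`. -/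
def IsLZTypeParsing {α : Type*} (s : List α) (ts : List (List α)) : Prop :=
  ts.flatten = s ∧ (∀ t ∈ ts, t ≠ []) ∧
    ∀ i (h : i < ts.length),
      ts[i].length = 1 ∨ ts[i] <:+: s.take ((ts.take (i + 1)).flatten.length - 1)

/-- `ts` is a novLZ-type parsing of `s`: a decomposition of `s` into nonempty strings such that
each `tᵢ` is a single letter or occurs in `t₁⋯tᵢ₋₁`. -/
def IsNovLZTypeParsing {α : Type*} (s : List α) (ts : List (List α)) : Prop :=
  ts.flatten = s ∧ (∀ t ∈ ts, t ≠ []) ∧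
    ∀ i (h : i < ts.length),
      ts[i].length = 1 ∨ ts[i] <:+: (ts.take i).flatten

/-- `ts` is an LZ3-type parsing of `s`: a decomposition of `s` into nonempty strings such that
each `tᵢ` minus its last letter occurs in `s[1..|t₁⋯tᵢ|-2]`. -/
def IsLZ3TypeParsing {α : Type*} (s : List α) (ts : List (List α)) : Prop :=
  ts.flatten = s ∧ (∀ t ∈ ts, t ≠ []) ∧
    ∀ i (h : i < ts.length),
      ts[i].dropLast <:+: s.take ((ts.take (i + 1)).flatten.length - 2)

/-- `ts` is a novLZ3-type parsing of `s`: a decomposition of `s` into nonempty strings such that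
each `tᵢ` minus its last letter occurs in `t₁⋯tᵢ₋₁`. -/
def IsNovLZ3TypeParsing {α : Type*} (s : List α) (ts : List (List α)) : Prop :=
  ts.flatten = s ∧ (∀ t ∈ ts, t ≠ []) ∧
    ∀ i (h : i < ts.length),
      ts[i].dropLast <:+: (ts.take i).flatten

/-! ### The witness family `S k`:  `S 1 = [0]`, `S (k+1) = S k ++ S k ++ [1]`. -/

def S : ℕ → List (Fin 2)
  | 0 => []
  | 1 => [0]
  | (n+2) => S (n+1) ++ S (n+1) ++ [1]

lemma S_succ (k : ℕ) (hk : 1 ≤ k) : S (k+1) = S k ++ S k ++ [1] := by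
  obtain ⟨n, rfl⟩ : ∃ n, k = n + 1 := ⟨k - 1, by omega⟩
  rfl

lemma S_length : ∀ k, (S k).length = 2^k - 1
  | 0 => rfl
  | 1 => rfl
  | (n+2) => by
      have h := S_length (n+1)
      have h2 : (2:ℕ)^(n+1) ≥ 1 := Nat.one_le_two_pow
      simp [S, h, pow_succ]
      omega

lemma S_prefix : ∀ k t, t ≤ k → S t <+: S k := by
  intro k
  induction k with
  | zero => intro t ht; interval_cases t; exact List.prefix_refl _
  | succ n ih =>
    intro t ht
    rcases eq_or_lt_of_le ht with rfl | h
    · exact List.prefix_refl _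
    · have h1 : t ≤ n := by omega
      rcases Nat.eq_zero_or_pos n with rfl | hn
      · interval_cases t; exact List.nil_prefix
      · calc S t <+: S n := ih t h1
          _ <+: S (n+1) := by
              rw [S_succ n hn, List.append_assoc]
              exact (S n).prefix_append _

/-- Decomposition of `S K` with one level of structure exposed. -/
lemma S_decomp1 {t K : ℕ} (ht : 1 ≤ t) (h : t + 1 ≤ K) :
    ∃ R, S K = S t ++ S t ++ [1] ++ R := by
  obtain ⟨R, hR⟩ := S_prefix K (t+1) h
  exact ⟨R, by rw [← hR, S_succ t ht]⟩

/-- Decomposition of `S K` with two levels of structure exposed. -/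
lemma S_decomp2 {t K : ℕ} (ht : 1 ≤ t) (h : t + 2 ≤ K) :
    ∃ R, S K = S t ++ S t ++ [1] ++ (S t ++ S t ++ [1]) ++ [1] ++ R := by
  obtain ⟨R, hR⟩ := S_prefix K (t+2) (by omega)
  refine ⟨R, ?_⟩
  rw [← hR, S_succ (t+1) (by omega), S_succ t ht]
  try simp [List.append_assoc]

/-- `S t` starts with two zeros when `t ≥ 2`. -/
lemma S_start : ∀ t, 2 ≤ t → ∃ Q, S t = 0 :: 0 :: Q := by
  intro t
  induction t with
  | zero => omega
  | succ n ih =>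
    intro ht
    rcases Nat.lt_or_ge n 2 with h | h
    · interval_cases n
      · omega
      · exact ⟨[1], rfl⟩
    · obtain ⟨Q, hQ⟩ := ih h
      refine ⟨Q ++ S n ++ [1], ?_⟩
      rw [S_succ n (by omega), hQ]
      simp

/-- `S t` ends with a one when `t ≥ 2`. -/
lemma S_end {t : ℕ} (ht : 2 ≤ t) : ∃ Q, S t = Q ++ [1] ∧ Q.length = 2^t - 2 := by
  obtain ⟨n, rfl⟩ : ∃ n, t = n + 1 := ⟨t - 1, by omega⟩
  refine ⟨S n ++ S n, by rw [S_succ n (by omega)], ?_⟩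
  have := S_length n
  have h2 : (2:ℕ)^n ≥ 1 := Nat.one_le_two_pow
  simp [this, pow_succ]; omega

/-! ### Subset sums of `{2^r - 1 : t ≤ r < k}` -/

/-- `Dmem t k j` : `j` is a sum of distinct numbers `2^r - 1` with `t ≤ r < k`. -/
def Dmem (t k j : ℕ) : Prop :=
  ∃ F : Finset ℕ, (∀ r ∈ F, t ≤ r ∧ r < k) ∧ j = ∑ r ∈ F, (2^r - 1)

lemma Dmem_zero (t k : ℕ) : Dmem t k 0 := ⟨∅, by simp, by simp⟩

lemma Dmem_mono {t k k' j : ℕ} (h : k ≤ k') (hd : Dmem t k j) : Dmem t k' j := by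
  obtain ⟨F, h1, h2⟩ := hd
  exact ⟨F, fun r hr => ⟨(h1 r hr).1, lt_of_lt_of_le (h1 r hr).2 h⟩, h2⟩

lemma Dmem_add {t k j : ℕ} (hd : Dmem t k j) (hk : t ≤ k) :
    Dmem t (k+1) (j + (2^k - 1)) := by
  obtain ⟨F, h1, h2⟩ := hd
  have hkF : k ∉ F := fun h => absurd (h1 k h).2 (lt_irrefl k)
  refine ⟨insert k F, ?_, ?_⟩
  · intro r hr
    rcases Finset.mem_insert.mp hr with rfl | hr
    · omega
    · exact ⟨(h1 r hr).1, by have := (h1 r hr).2; omega⟩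
  · rw [Finset.sum_insert hkF, h2]; ring

lemma sum_pow_Ico (u m : ℕ) (h : u ≤ m) : ∑ r ∈ Finset.Ico u m, (2:ℕ)^r = 2^m - 2^u := by
  induction m with
  | zero => interval_cases u; simp
  | succ n ih =>
    rcases eq_or_lt_of_le h with rfl | h2
    · simp
    · have hun : u ≤ n := by omega
      rw [Finset.sum_Ico_succ_top hun, ih hun, pow_succ]
      have h1 : (2:ℕ)^u ≤ 2^n := Nat.pow_le_pow_right (by norm_num) hun
      omega

lemma sum_g_le {u m : ℕ} (B : Finset ℕ) (hB : ∀ r ∈ B, u ≤ r ∧ r < m) :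
    ∑ r ∈ B, ((2:ℕ)^r - 1) ≤ 2^m - 2^u := by
  rcases le_or_gt u m with h | h
  · calc ∑ r ∈ B, ((2:ℕ)^r - 1) ≤ ∑ r ∈ Finset.Ico u m, ((2:ℕ)^r - 1) := by
          apply Finset.sum_le_sum_of_subset
          intro r hr
          exact Finset.mem_Ico.mpr (hB r hr)
      _ ≤ ∑ r ∈ Finset.Ico u m, (2:ℕ)^r := by
          apply Finset.sum_le_sum; intro i _
          have : (1:ℕ) ≤ 2^i := Nat.one_le_two_pow
          omega
      _ = 2^m - 2^u := sum_pow_Ico u m h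
  · have : B = ∅ := by
      rcases Finset.eq_empty_or_nonempty B with rfl | ⟨x, hx⟩
      · rfl
      · have := hB x hx; omega
    simp [this]

/-- Separation: distinct elements of `Dmem u k` differ by at least `2^u - 1`. -/
lemma Dmem_separation {u k d1 d2 : ℕ} (h1 : Dmem u k d1) (h2 : Dmem u k d2)
    (hlt : d1 < d2) : d1 + (2^u - 1) ≤ d2 := by
  obtain ⟨F1, hF1, rfl⟩ := h1
  obtain ⟨F2, hF2, rfl⟩ := h2
  have key : ∑ r ∈ F2, ((2:ℕ)^r - 1) + ∑ r ∈ F1 \ F2, ((2:ℕ)^r - 1)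
      = ∑ r ∈ F1, ((2:ℕ)^r - 1) + ∑ r ∈ F2 \ F1, ((2:ℕ)^r - 1) := by
    rw [← Finset.sum_union (Finset.disjoint_sdiff), ← Finset.sum_union (Finset.disjoint_sdiff),
      Finset.union_sdiff_self_eq_union, Finset.union_sdiff_self_eq_union, Finset.union_comm]
  have hAB : Disjoint (F2 \ F1) (F1 \ F2) := disjoint_sdiff_sdiff
  have hAne : (F2 \ F1).Nonempty := by
    by_contra hA0
    rw [Finset.not_nonempty_iff_eq_empty] at hA0
    rw [hA0] at key; simp at key; omega
  obtain ⟨m, hmA, hmmax⟩ :=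
    Finset.exists_max_image ((F2 \ F1) ∪ (F1 \ F2)) id
      (hAne.mono Finset.subset_union_left)
  have hmax : ∀ x ∈ (F2 \ F1) ∪ (F1 \ F2), x ≤ m := fun x hx => hmmax x hx
  rcases Finset.mem_union.mp hmA with hmA' | hmB'
  · -- max in F2 \ F1 : good case
    have hBsub : ∀ r ∈ F1 \ F2, u ≤ r ∧ r < m := by
      intro r hr
      have h1 : r ≤ m := hmax r (Finset.mem_union_right _ hr)
      have h2 : r ≠ m := by
        rintro rfl
        exact (Finset.disjoint_left.mp hAB hmA') hr
      have h3 : u ≤ r := (hF1 r (Finset.mem_sdiff.mp hr).1).1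
      exact ⟨h3, by omega⟩
    have hBle : ∑ r ∈ F1 \ F2, ((2:ℕ)^r - 1) ≤ 2^m - 2^u := sum_g_le _ hBsub
    have hAge : (2:ℕ)^m - 1 ≤ ∑ r ∈ F2 \ F1, ((2:ℕ)^r - 1) :=
      Finset.single_le_sum (f := fun r => (2:ℕ)^r - 1) (fun i _ => Nat.zero_le _) hmA'
    have hum : u ≤ m := (hF2 m (Finset.mem_sdiff.mp hmA').1).1
    have hpow : (2:ℕ)^u ≤ 2^m := Nat.pow_le_pow_right (by norm_num) hum
    have hpu : (1:ℕ) ≤ 2^u := Nat.one_le_two_pow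
    omega
  · -- max in F1 \ F2 : contradiction with d1 < d2
    have hAsub : ∀ r ∈ F2 \ F1, u ≤ r ∧ r < m := by
      intro r hr
      have h1 : r ≤ m := hmax r (Finset.mem_union_left _ hr)
      have h2 : r ≠ m := by
        rintro rfl
        exact (Finset.disjoint_left.mp hAB hr) hmB'
      have h3 : u ≤ r := (hF2 r (Finset.mem_sdiff.mp hr).1).1
      exact ⟨h3, by omega⟩
    have hAle : ∑ r ∈ F2 \ F1, ((2:ℕ)^r - 1) ≤ 2^m - 2^u := sum_g_le _ hAsub
    have hBge : (2:ℕ)^m - 1 ≤ ∑ r ∈ F1 \ F2, ((2:ℕ)^r - 1) :=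
      Finset.single_le_sum (f := fun r => (2:ℕ)^r - 1) (fun i _ => Nat.zero_le _) hmB'
    have hum : u ≤ m := (hF1 m (Finset.mem_sdiff.mp hmB').1).1
    have hpow : (2:ℕ)^u ≤ 2^m := Nat.pow_le_pow_right (by norm_num) hum
    have hpu : (1:ℕ) ≤ 2^u := Nat.one_le_two_pow
    omega

/-- Splitting off the generator `2^t - 1`. -/
lemma Dmem_split {t k j : ℕ} (h : Dmem t k j) :
    Dmem (t+1) k j ∨ ∃ d, Dmem (t+1) k d ∧ j = (2^t - 1) + d := by
  obtain ⟨F, hF, rfl⟩ := h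
  by_cases ht : t ∈ F
  · right
    refine ⟨∑ r ∈ F.erase t, (2^r - 1), ⟨F.erase t, ?_, rfl⟩, ?_⟩
    · intro r hr
      have h1 := hF r (Finset.mem_of_mem_erase hr)
      have h2 := Finset.ne_of_mem_erase hr
      omega
    · rw [← Finset.add_sum_erase _ _ ht]
  · left
    refine ⟨F, ?_, rfl⟩
    intro r hr
    have h1 := hF r hr
    have : r ≠ t := fun h => ht (h ▸ hr)
    omega

/-- Small elements of `Dmem t k` are `0` or `2^t - 1`. -/
lemma Dmem_small {t k j : ℕ} (ht : 1 ≤ t) (h : Dmem t k j) (hj : j + 3 ≤ 2^(t+1)) :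
    j = 0 ∨ j = 2^t - 1 := by
  have hpt : (1:ℕ) ≤ 2^t := Nat.one_le_two_pow
  have hps : (2:ℕ)^(t+1) = 2 * 2^t := by ring
  rcases Dmem_split h with h1 | ⟨d, hd, rfl⟩
  · left
    by_contra h0
    have := Dmem_separation (Dmem_zero (t+1) k) h1 (by omega)
    have hpt1 : (2:ℕ)^(t+1) ≥ 2 := by rw [hps]; omega
    omega
  · right
    rcases Nat.eq_zero_or_pos d with rfl | hd0
    · rfl
    · have := Dmem_separation (Dmem_zero (t+1) k) hd hd0
      omega

/-! ### Occurrences of `S t` in `S K` are located at subset sums -/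

/-- `Occ K t j` : `S t` occurs in `S K` at position `j`. -/
def Occ (K t j : ℕ) : Prop := ((S K).drop j).take (2^t - 1) = S t

lemma occ_zero : ∀ K, 1 ≤ K → ∀ j, ((S K).drop j).take 1 = [0] → Dmem 1 K j := by
  intro K
  induction K with
  | zero => omega
  | succ n ih =>
    intro _ j hj
    rcases Nat.eq_zero_or_pos n with rfl | hn
    · -- S 1 = [0]
      have hj0 : j = 0 := by
        by_contra h0
        have : (S 1).drop j = [] := by
          apply List.drop_eq_nil_of_le
          simp [S]; omega
        rw [this] at hj; simp at hj
      subst hj0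
      exact Dmem_zero 1 1
    · rw [S_succ n hn] at hj
      have hlen : (S n).length = 2^n - 1 := S_length n
      have hp : (1:ℕ) ≤ 2^n := Nat.one_le_two_pow
      rcases Nat.lt_or_ge j (2^n - 1) with h1 | h1
      · -- inside the first copy
        have hd : (S n ++ S n ++ [1]).drop j = (S n).drop j ++ (S n ++ [1]) := by
          rw [List.append_assoc, List.drop_append_of_le_length (by omega)]
        rw [hd] at hj
        have hne : (S n).drop j ≠ [] := by
          apply List.ne_nil_of_length_pos
          rw [List.length_drop]; omega
        rw [List.take_append_of_le_length] at hj
        · exact Dmem_mono (by omega) (ih hn j hj)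
        · rw [List.length_drop]; omega
      · -- inside the second copy (or the final 1)
        have hj2 : j = (2^n - 1) + (j - (2^n - 1)) := by omega
        have hd : (S n ++ S n ++ [1]).drop j = (S n ++ [1]).drop (j - (2^n - 1)) := by
          conv_lhs => rw [List.append_assoc, hj2, ← List.drop_drop, List.drop_left' hlen]
        rw [hd] at hj
        rcases Nat.lt_or_ge (j - (2^n - 1)) (2^n - 1) with h2 | h2
        · have hd2 : (S n ++ [1]).drop (j - (2^n-1)) = (S n).drop (j - (2^n-1)) ++ [1] := by
            rw [List.drop_append_of_le_length (by omega)]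
          rw [hd2] at hj
          rw [List.take_append_of_le_length (by rw [List.length_drop]; omega)] at hj
          have := Dmem_add (ih hn _ hj) hn
          have hj' : j - (2^n-1) + (2^n - 1) = j := by omega
          rw [hj'] at this
          exact this
        · -- lands on the final 1 or beyond : impossible
          exfalso
          rcases Nat.eq_or_lt_of_le h2 with h3 | h3
          · rw [← h3, List.drop_left' hlen] at hj
            simp at hj
          · have : (S n ++ [1]).drop (j - (2^n-1)) = [] := by
              apply List.drop_eq_nil_of_le
              simp [hlen]; omega
            rw [this] at hj; simp at hj

lemma occ_step {K t j : ℕ} (ht : 1 ≤ t) (h : Occ K (t+1) j) :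
    Occ K t j ∧ Occ K t (j + (2^t - 1)) := by
  have hlen : (S t).length = 2^t - 1 := S_length t
  have hp : (1:ℕ) ≤ 2^t := Nat.one_le_two_pow
  have hps : (2:ℕ)^(t+1) = 2*2^t := by ring
  unfold Occ at h
  rw [S_succ t ht] at h
  have hr1 : (S t ++ (S t ++ [1])).take (2^t - 1) = S t := by
    rw [List.take_append_of_le_length (by omega), List.take_of_length_le (by omega)]
  have hr2 : (S t ++ [1]).take (2^t - 1) = S t := by
    rw [List.take_append_of_le_length (by omega), List.take_of_length_le (by omega)]
  constructor
  · have h3 := congrArg (List.take (2^t - 1)) h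
    rw [List.take_take] at h3
    have hm : (2^t - 1) ⊓ (2^(t+1) - 1) = 2^t - 1 := by omega
    rw [hm, List.append_assoc, hr1] at h3
    exact h3
  · have h3 := congrArg (List.drop (2^t - 1)) h
    rw [List.drop_take, List.drop_drop, List.append_assoc, List.drop_left' hlen] at h3
    have h2 := congrArg (List.take (2^t - 1)) h3
    rw [List.take_take] at h2
    have hm : (2^t - 1) ⊓ (2^(t+1) - 1 - (2^t - 1)) = 2^t - 1 := by omega
    rw [hm, hr2] at h2
    exact h2

lemma occ_to_Dmem : ∀ t, 1 ≤ t → ∀ K j, Occ K t j → Dmem t K j := by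
  intro t
  induction t with
  | zero => omega
  | succ n ih =>
    intro _ K j h
    rcases Nat.eq_zero_or_pos n with rfl | hn
    · -- base case t = 1
      have h' : ((S K).drop j).take 1 = [0] := by
        have h1 : (2:ℕ)^(0+1) - 1 = 1 := by norm_num
        rw [Occ, h1] at h
        exact h
      have hK : 1 ≤ K := by
        by_contra hK
        have : K = 0 := by omega
        subst this
        simp [S] at h'
      exact occ_zero K hK j h'
    · obtain ⟨h1, h2⟩ := occ_step hn h
      have d1 := ih hn K j h1
      have d2 := ih hn K (j + (2^n - 1)) h2
      have hp2 : (2:ℕ) ≤ 2^n := by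
        calc (2:ℕ) = 2^1 := by norm_num
          _ ≤ 2^n := Nat.pow_le_pow_right (by norm_num) hn
      have hps : (2:ℕ)^(n+1) = 2*2^n := by ring
      rcases Dmem_split d1 with hd | ⟨e1, he1, rfl⟩
      · exact hd
      · rcases Dmem_split d2 with hd' | ⟨e2, he2, heq⟩
        · exfalso
          have := Dmem_separation he1 hd' (by omega)
          omega
        · exfalso
          have he : e2 = e1 + (2^n - 1) := by omega
          have := Dmem_separation he1 (he ▸ he2) (by omega)
          omega

/-- CORE: occurrences of `S t` in `S K` before position `2^(t+1) - 2` are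
only at `0` and `2^t - 1`. -/
lemma occ_small {K t j : ℕ} (ht : 1 ≤ t) (h : Occ K t j) (hj : j + 3 ≤ 2^(t+1)) :
    j = 0 ∨ j = 2^t - 1 :=
  Dmem_small ht (occ_to_Dmem t ht K j h) hj

/-! ### Generic facts about the greedy parser -/

lemma phrasesFrom_pos {α : Type*} (P : List α → ℕ → ℕ → Prop) (s : List α) (i : ℕ)
    (h : i < s.length) :
    phrasesFrom P s i
      = (s.drop i).take (phraseLen P s i) :: phrasesFrom P s (i + phraseLen P s i) := by
  rw [phrasesFrom]
  simp [h]

lemma phrasesFrom_nil {α : Type*} (P : List α → ℕ → ℕ → Prop) (s : List α) (i : ℕ)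
    (h : ¬ i < s.length) : phrasesFrom P s i = [] := by
  rw [phrasesFrom]
  simp [h]

lemma phraseLen_eq {α : Type*} {P : List α → ℕ → ℕ → Prop} {s : List α} {i L : ℕ}
    (hL1 : 1 ≤ L) (hle : L ≤ s.length - i) (hP : P s i L)
    (hmax : ∀ m, L < m → m ≤ s.length - i → ¬ P s i m) : phraseLen P s i = L := by
  unfold phraseLen
  rw [Nat.findGreatest_eq_iff.mpr ⟨hle, fun _ => hP, fun n h1 h2 => hmax n h1 h2⟩]
  omega

lemma phraseLen_eq_one {α : Type*} {P : List α → ℕ → ℕ → Prop} {s : List α} {i : ℕ}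
    (hmax : ∀ m, 2 ≤ m → m ≤ s.length - i → ¬ P s i m) : phraseLen P s i = 1 := by
  unfold phraseLen
  have h : Nat.findGreatest (fun ℓ => P s i ℓ) (s.length - i) ≤ 1 := by
    by_contra hc
    push_neg at hc
    have h0 : 0 < Nat.findGreatest (fun ℓ => P s i ℓ) (s.length - i) := by omega
    rw [Nat.findGreatest_pos] at h0
    obtain ⟨m, hm0, hmle, hmP⟩ := h0
    rcases Nat.lt_or_ge m 2 with h2 | h2
    · -- findGreatest > 1 but a witness exists ; use le_findGreatest to get a big witness
      have hbig := Nat.le_findGreatest hmle hmP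
      have hPbig : P s i (Nat.findGreatest (fun ℓ => P s i ℓ) (s.length - i)) :=
        Nat.findGreatest_spec hmle hmP
      exact hmax _ (by omega) (Nat.findGreatest_le _) hPbig
    · exact hmax m h2 hmle hmP
  omega

/-- Monotonicity of `PermNov` in the length. -/
lemma permNov_mono {α : Type*} {s : List α} {i ℓ ℓ' : ℕ} (h : PermNov s i ℓ') (hle : ℓ ≤ ℓ') :
    PermNov s i ℓ := by
  obtain ⟨j, hj, he⟩ := h
  refine ⟨j, by omega, ?_⟩
  have := congrArg (List.take ℓ) he
  rwa [List.take_take, List.take_take, Nat.min_eq_left hle] at this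

/-! ### Content facts about `S K` -/

lemma S_take {t K : ℕ} (h : t ≤ K) : (S K).take (2^t - 1) = S t := by
  obtain ⟨R, hR⟩ := S_prefix K t h
  rw [← hR, List.take_left' (S_length t)]

/-- Generic computation: drops and takes in `S K` via the 2-level decomposition.
`S K = A ++ A ++ [1] ++ A ++ A ++ [1] ++ [1] ++ R` with `A = S t`. -/
lemma S_two_level {t K : ℕ} (ht : 1 ≤ t) (h : t + 2 ≤ K) :
    ∃ R, S K = S t ++ (S t ++ ([1] ++ (S t ++ (S t ++ ([1] ++ ([1] ++ R)))))) := by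
  obtain ⟨R, hR⟩ := S_decomp2 ht h
  exact ⟨R, by rw [hR]; simp [List.append_assoc]⟩

lemma S_one_level {t K : ℕ} (ht : 1 ≤ t) (h : t + 1 ≤ K) :
    ∃ R, S K = S t ++ (S t ++ ([1] ++ R)) := by
  obtain ⟨R, hR⟩ := S_decomp1 ht h
  exact ⟨R, by rw [hR]; simp [List.append_assoc]⟩

lemma drop_SK_len_add {K : ℕ} (a b : List (Fin 2)) (n : ℕ) (h : S K = a ++ b) :
    (S K).drop (a.length + n) = b.drop n := by
  rw [h, List.drop_append]
  simp

/-- (B2) `s[2^t-1 .. 2^t-1+2^t-1] = S t ++ [1]`. -/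
lemma content_B2 {t K : ℕ} (ht : 1 ≤ t) (h : t + 1 ≤ K) :
    ((S K).drop (2^t - 1)).take (2^t) = S t ++ [1] := by
  obtain ⟨R, hR⟩ := S_one_level ht h
  have hL := S_length t
  have hp : (1:ℕ) ≤ 2^t := Nat.one_le_two_pow
  have h1 : (S K).drop (2^t - 1) = S t ++ ([1] ++ R) := by
    have := drop_SK_len_add (S t) (S t ++ ([1] ++ R)) 0 hR
    simpa [hL] using this
  rw [h1]
  have h2 : 2^t = (S t).length + 1 := by omega
  rw [h2, List.take_append]
  simp

/-- (B5) `s[2^t-1 .. 2^t-1+2^t] = S t ++ [1, 0]` (needs two levels). -/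
lemma content_B5 {t K : ℕ} (ht : 2 ≤ t) (h : t + 2 ≤ K) :
    ((S K).drop (2^t - 1)).take (2^t + 1) = S t ++ [1, 0] := by
  obtain ⟨R, hR⟩ := S_two_level (by omega) h
  have hL := S_length t
  have hp : (1:ℕ) ≤ 2^t := Nat.one_le_two_pow
  have h1 : (S K).drop (2^t - 1) = S t ++ ([1] ++ (S t ++ (S t ++ ([1] ++ ([1] ++ R))))) := by
    have := drop_SK_len_add (S t) _ 0 hR
    simpa [hL] using this
  rw [h1]
  have h2 : 2^t + 1 = (S t).length + 2 := by omega
  rw [h2, List.take_append]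
  obtain ⟨Q, hQ⟩ := S_start t ht
  rw [hQ]
  simp

/-- (B4) `s[0 .. 2^t] = S t ++ [0, 0]`. -/
lemma content_B4 {t K : ℕ} (ht : 2 ≤ t) (h : t + 1 ≤ K) :
    (S K).take (2^t + 1) = S t ++ [0, 0] := by
  obtain ⟨R, hR⟩ := S_one_level (by omega) h
  have hL := S_length t
  have hp : (1:ℕ) ≤ 2^t := Nat.one_le_two_pow
  rw [hR]
  have h2 : 2^t + 1 = (S t).length + 2 := by omega
  rw [h2, List.take_append]
  obtain ⟨Q, hQ⟩ := S_start t ht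
  rw [hQ]
  simp

/-- (B1/B3) `s[3·2^t-2 .. 3·2^t-2+2^t] = S t ++ [1, 1]`. -/
lemma content_B3 {t K : ℕ} (ht : 2 ≤ t) (h : t + 2 ≤ K) :
    ((S K).drop (3 * 2^t - 2)).take (2^t + 1) = S t ++ [1, 1] := by
  obtain ⟨R, hR⟩ := S_two_level (by omega) h
  have hL := S_length t
  have hp : (1:ℕ) ≤ 2^t := Nat.one_le_two_pow
  have hR' : S K = (S t ++ S t ++ [1] ++ S t) ++ (S t ++ ([1] ++ ([1] ++ R))) := by
    rw [hR]; simp [List.append_assoc]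
  have hlen : (S t ++ S t ++ [1] ++ S t).length = 3 * 2^t - 2 := by
    simp [hL]; omega
  have h1 : (S K).drop (3 * 2^t - 2) = S t ++ ([1] ++ ([1] ++ R)) := by
    have := drop_SK_len_add _ _ 0 hR'
    rw [hlen] at this
    simpa using this
  rw [h1]
  have h2 : 2^t + 1 = (S t).length + 2 := by omega
  rw [h2, List.take_append]
  simp

/-- (A1) `s[2^(t+1)-2 .. 2^(t+1)-2+2^t-1] = 1 :: S t`. -/
lemma content_A1 {t K : ℕ} (ht : 1 ≤ t) (h : t + 2 ≤ K) :
    ((S K).drop (2^(t+1) - 2)).take (2^t) = 1 :: S t := by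
  obtain ⟨R, hR⟩ := S_two_level ht h
  have hL := S_length t
  have hp : (1:ℕ) ≤ 2^t := Nat.one_le_two_pow
  have hps : (2:ℕ)^(t+1) = 2*2^t := by ring
  have hR' : S K = (S t ++ S t) ++ ([1] ++ (S t ++ (S t ++ ([1] ++ ([1] ++ R))))) := by
    rw [hR]; simp [List.append_assoc]
  have hlen : (S t ++ S t).length = 2^(t+1) - 2 := by simp [hL]; omega
  have h1 : (S K).drop (2^(t+1) - 2) = [1] ++ (S t ++ (S t ++ ([1] ++ ([1] ++ R)))) := by
    have := drop_SK_len_add _ _ 0 hR'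
    rw [hlen] at this
    simpa using this
  rw [h1]
  have h2 : 2^t = ([1] : List (Fin 2)).length + (2^t - 1) := by simp; omega
  rw [h2, List.take_append]
  rw [List.take_append_of_le_length (by omega), List.take_of_length_le (by omega)]
  rw [Nat.add_sub_cancel_left, List.take_of_length_le (by omega)]
  rfl

/-- (A2) `s[2^t-2 .. 2^t-2+2^t-1] = 1 :: S t`. -/
lemma content_A2 {t K : ℕ} (ht : 2 ≤ t) (h : t + 1 ≤ K) :
    ((S K).drop (2^t - 2)).take (2^t) = 1 :: S t := by
  obtain ⟨R, hR⟩ := S_one_level (by omega) h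
  have hL := S_length t
  have hp : (1:ℕ) ≤ 2^t := Nat.one_le_two_pow
  obtain ⟨Q, hQ, hQlen⟩ := S_end ht
  have hR' : S K = Q ++ ([1] ++ (S t ++ ([1] ++ R))) := by
    rw [hR, hQ]; simp [List.append_assoc]
  have h1 : (S K).drop (2^t - 2) = [1] ++ (S t ++ ([1] ++ R)) := by
    have := drop_SK_len_add _ _ 0 hR'
    rw [hQlen] at this
    simpa using this
  rw [h1]
  have h2 : 2^t = ([1] : List (Fin 2)).length + (2^t - 1) := by simp; omega
  rw [h2, List.take_append]
  rw [List.take_append_of_le_length (by omega), List.take_of_length_le (by omega)]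
  rw [Nat.add_sub_cancel_left, List.take_of_length_le (by omega)]
  rfl

/-! ### The novLZ3 parsing of `S K` has `K` phrases -/

lemma nov3_chain (K : ℕ) : ∀ d t, 1 ≤ t → t ≤ K → K - t = d →
    (phrasesFrom PermNov3 (S K) (2^t - 1)).length = d := by
  intro d
  induction d with
  | zero =>
    intro t ht htK hd
    have ht' : t = K := by omega
    subst ht'
    rw [phrasesFrom_nil _ _ _ (by rw [S_length]; omega)]
    rfl
  | succ n ih =>
    intro t ht htK hd
    have htK' : t + 1 ≤ K := by omega
    have hL := S_length K
    have hp : (1:ℕ) ≤ 2^t := Nat.one_le_two_pow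
    have hmono : (2:ℕ)^(t+1) ≤ 2^K := Nat.pow_le_pow_right (by norm_num) htK'
    have hps : (2:ℕ)^(t+1) = 2*2^t := by ring
    have hlen : phraseLen PermNov3 (S K) (2^t - 1) = 2^t := by
      apply phraseLen_eq (by omega) (by omega)
      · refine ⟨0, by omega, ?_⟩
        rw [List.drop_zero]
        have h1 : (2:ℕ)^t - 1 = 2^t - 1 := rfl
        have h2 : (S K).take (2^t - 1) = S t := S_take (by omega)
        obtain ⟨R, hRe⟩ := S_one_level ht htK'
        have h3 : (S K).drop (2^t - 1) = S t ++ ([1] ++ R) := by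
          have := drop_SK_len_add (S t) _ 0 hRe
          simpa [S_length t] using this
        rw [h2, h3, List.take_append_of_le_length (by rw [S_length]),
          List.take_of_length_le (by rw [S_length])]
      · intro m h1 _ hP
        obtain ⟨j, hj, _⟩ := hP
        omega
    rw [phrasesFrom_pos _ _ _ (by omega)]
    rw [hlen]
    have harith : 2^t - 1 + 2^t = 2^(t+1) - 1 := by omega
    rw [harith]
    simp only [List.length_cons]
    rw [ih (t+1) (by omega) htK' (by omega)]

lemma zNov3_S (K : ℕ) (hK : 1 ≤ K) : zNov3 (S K) = K := by
  unfold zNov3 novlz3Phrases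
  have hL := S_length K
  have hp : (2:ℕ)^K ≥ 2 := by
    calc (2:ℕ) = 2^1 := by norm_num
      _ ≤ 2^K := Nat.pow_le_pow_right (by norm_num) hK
  have hlen : phraseLen PermNov3 (S K) 0 = 1 := by
    apply phraseLen_eq_one
    intro m h2 _ hP
    obtain ⟨j, hj, _⟩ := hP
    omega
  rw [phrasesFrom_pos _ _ _ (by omega), hlen]
  simp only [List.length_cons]
  have h1 : (0:ℕ) + 1 = 2^1 - 1 := by norm_num
  rw [h1, nov3_chain K (K-1) 1 (by omega) hK (by omega)]
  omega

/-! ### The novLZ parsing of `S K` has `2K - 1` phrases -/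

lemma nov_chain (K : ℕ) : ∀ d t, 2 ≤ t → t + 1 ≤ K → K - 1 - t = d →
    (phrasesFrom PermNov (S K) (2^(t+1) - 2)).length = 2*d + 1 := by
  intro d
  induction d with
  | zero =>
    -- t = K - 1 : final single-letter phrase at position 2^K - 2
    intro t ht htK hd
    have ht' : t + 1 = K := by omega
    have hL := S_length K
    have hp : (2:ℕ)^(t+1) ≥ 2 := by
      calc (2:ℕ) = 2^1 := by norm_num
        _ ≤ 2^(t+1) := Nat.pow_le_pow_right (by norm_num) (by omega)
    have hpK : (2:ℕ)^(t+1) = 2^K := by rw [ht']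
    have hlen : phraseLen PermNov (S K) (2^(t+1) - 2) = 1 := by
      apply phraseLen_eq_one
      intro m h2 hm _
      rw [hL, ← ht'] at hm
      omega
    rw [phrasesFrom_pos _ _ _ (by omega), hlen,
      phrasesFrom_nil _ _ _ (by rw [hL, ← ht']; omega)]
    rfl
  | succ n ih =>
    intro t ht htK hd
    have htK' : t + 2 ≤ K := by omega
    have hL := S_length K
    have hLt := S_length t
    have hp : (1:ℕ) ≤ 2^t := Nat.one_le_two_pow
    have hp2 : (2:ℕ) ≤ 2^t := by
      calc (2:ℕ) = 2^1 := by norm_num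
        _ ≤ 2^t := Nat.pow_le_pow_right (by norm_num) (by omega)
    have hmono : (2:ℕ)^(t+2) ≤ 2^K := Nat.pow_le_pow_right (by norm_num) htK'
    have hps : (2:ℕ)^(t+1) = 2*2^t := by ring
    have hps2 : (2:ℕ)^(t+2) = 4*2^t := by ring
    -- first phrase : at 2^(t+1) - 2, length 2^t, content 1 :: S t
    have hlen1 : phraseLen PermNov (S K) (2^(t+1) - 2) = 2^t := by
      apply phraseLen_eq (by omega) (by omega)
      · refine ⟨2^t - 2, by omega, ?_⟩
        rw [content_A2 ht (by omega), content_A1 (by omega) htK']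
      · intro m h1 hm2 hP
        have hP1 : PermNov (S K) (2^(t+1) - 2) (2^t + 1) := permNov_mono hP (by omega)
        obtain ⟨j, hj, he⟩ := hP1
        have he2 := congrArg (List.take (2^t)) he
        rw [List.take_take, List.take_take] at he2
        have hm : (2^t) ⊓ (2^t + 1) = 2^t := by omega
        rw [hm, content_A1 (by omega) htK'] at he2
        -- he2 : take 2^t (drop j) = 1 :: S t ; drop the leading 1
        have he3 := congrArg (List.drop 1) he2
        rw [List.drop_take, List.drop_drop] at he3
        have hocc : Occ K t (j + 1) := he3
        rcases occ_small (by omega) hocc (by omega) with h0 | h0 <;> omega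
    rw [phrasesFrom_pos _ _ _ (by omega), hlen1]
    have harith1 : 2^(t+1) - 2 + 2^t = 3 * 2^t - 2 := by omega
    rw [harith1]
    -- second phrase : at 3·2^t - 2, length 2^t, content S t ++ [1]
    have hcontB1 : ((S K).drop (3 * 2^t - 2)).take (2^t) = S t ++ [1] := by
      have h3 := congrArg (List.take (2^t)) (content_B3 ht htK')
      rw [List.take_take] at h3
      have hm : (2^t) ⊓ (2^t + 1) = 2^t := by omega
      rw [hm] at h3
      rw [h3]
      have h2 : 2^t = (S t).length + 1 := by omega
      rw [h2, List.take_append]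
      rw [List.take_of_length_le (by omega), Nat.add_sub_cancel_left]
      rfl
    have hlen2 : phraseLen PermNov (S K) (3 * 2^t - 2) = 2^t := by
      apply phraseLen_eq (by omega) (by omega)
      · refine ⟨2^t - 1, by omega, ?_⟩
        rw [hcontB1]
        have h3 := congrArg (List.take (2^t)) (content_B5 ht htK')
        rw [List.take_take] at h3
        have hm : (2^t) ⊓ (2^t + 1) = 2^t := by omega
        rw [hm] at h3
        rw [h3]
        have h2 : 2^t = (S t).length + 1 := by omega
        rw [h2, List.take_append]
        rw [List.take_of_length_le (by omega), Nat.add_sub_cancel_left]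
        rfl
      · intro m h1 hm2 hP
        have hP1 : PermNov (S K) (3 * 2^t - 2) (2^t + 1) := permNov_mono hP (by omega)
        obtain ⟨j, hj, he⟩ := hP1
        rw [content_B3 ht htK'] at he
        have hocc : Occ K t j := by
          unfold Occ
          have he2 := congrArg (List.take (2^t - 1)) he
          rw [List.take_take] at he2
          have hm : (2^t - 1) ⊓ (2^t + 1) = 2^t - 1 := by omega
          have hr : ((S t ++ [1, 1] : List (Fin 2))).take (2^t - 1) = S t := by
            rw [List.take_append_of_le_length (by omega), List.take_of_length_le (by omega)]
          rw [hm, hr] at he2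
          exact he2
        rcases occ_small (by omega) hocc (by omega) with h0 | h0
        · subst h0
          rw [List.drop_zero, content_B4 ht (by omega)] at he
          have := List.append_cancel_left he
          simp at this
        · subst h0
          rw [content_B5 ht htK'] at he
          have := List.append_cancel_left he
          simp at this
    rw [phrasesFrom_pos _ _ _ (by omega), hlen2]
    have harith2 : 3 * 2^t - 2 + 2^t = 2^(t+1+1) - 2 := by
      have : (2:ℕ)^(t+1+1) = 4*2^t := by ring
      omega
    rw [harith2]
    simp only [List.length_cons]
    rw [ih (t+1) (by omega) (by omega) (by omega)]
    ring

lemma S3_explicit : S 3 = [0, 0, 1, 0, 0, 1, 1] := by rfl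

lemma zNov_S (K : ℕ) (hK : 3 ≤ K) : zNov (S K) = 2 * K - 1 := by
  unfold zNov novlzPhrases
  have hL := S_length K
  have hp : (8:ℕ) ≤ 2^K := by
    calc (8:ℕ) = 2^3 := by norm_num
      _ ≤ 2^K := Nat.pow_le_pow_right (by norm_num) hK
  obtain ⟨R, hR⟩ := S_prefix K 3 hK
  rw [S3_explicit] at hR
  -- position 0 : single letter
  have hlen0 : phraseLen PermNov (S K) 0 = 1 := by
    apply phraseLen_eq_one
    intro m h2 _ hP
    obtain ⟨j, hj, _⟩ := hP
    omega
  -- position 1 : single letter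
  have hlen1 : phraseLen PermNov (S K) 1 = 1 := by
    apply phraseLen_eq_one
    intro m h2 _ hP
    obtain ⟨j, hj, _⟩ := hP
    omega
  -- position 2 : single letter
  have hlen2 : phraseLen PermNov (S K) 2 = 1 := by
    apply phraseLen_eq_one
    intro m h2 _ hP
    have hP2 : PermNov (S K) 2 2 := permNov_mono hP h2
    obtain ⟨j, hj, he⟩ := hP2
    have hj0 : j = 0 := by omega
    subst hj0
    rw [← hR] at he
    simp at he
  -- position 3 : phrase 001 of length 3
  have hlen3 : phraseLen PermNov (S K) 3 = 3 := by
    apply phraseLen_eq (by omega) (by omega)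
    · refine ⟨0, by omega, ?_⟩
      rw [← hR]
      simp
    · intro m h1 _ hP
      obtain ⟨j, hj, _⟩ := hP
      omega
  rw [phrasesFrom_pos _ _ _ (by omega), hlen0]
  rw [phrasesFrom_pos _ _ _ (by omega), hlen1]
  rw [phrasesFrom_pos _ _ _ (by omega), hlen2]
  rw [phrasesFrom_pos _ _ _ (by omega), hlen3]
  have h6 : (3:ℕ) + 3 = 2^(2+1) - 2 := by norm_num
  rw [show (0:ℕ)+1 = 1 by rfl, show (1:ℕ)+1 = 2 by rfl, show (2:ℕ)+1 = 3 by rfl, h6]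
  simp only [List.length_cons]
  rw [nov_chain K (K - 3) 2 (by omega) (by omega) (by omega)]
  omega

lemma zNov_S1 : zNov (S 1) = 1 := by
  unfold zNov novlzPhrases
  have hlen0 : phraseLen PermNov (S 1) 0 = 1 := by
    apply phraseLen_eq_one
    intro m h2 _ hP
    obtain ⟨j, hj, _⟩ := hP
    omega
  rw [phrasesFrom_pos _ _ _ (by simp [S]), hlen0,
    phrasesFrom_nil _ _ _ (by simp [S])]
  rfl

lemma zNov_S2 : zNov (S 2) = 3 := by
  unfold zNov novlzPhrases
  have h1 : (S 2).length = 3 := by rfl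
  have hlen0 : phraseLen PermNov (S 2) 0 = 1 := by
    apply phraseLen_eq_one
    intro m h2 _ hP
    obtain ⟨j, hj, _⟩ := hP
    omega
  have hlen1 : phraseLen PermNov (S 2) 1 = 1 := by
    apply phraseLen_eq_one
    intro m h2 _ hP
    obtain ⟨j, hj, _⟩ := hP
    omega
  have hlen2 : phraseLen PermNov (S 2) 2 = 1 := by
    apply phraseLen_eq_one
    intro m h2 hm _
    rw [h1] at hm
    omega
  rw [phrasesFrom_pos _ _ _ (by rw [h1]; omega), hlen0]
  rw [phrasesFrom_pos _ _ _ (by rw [h1]; omega), hlen1]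
  rw [phrasesFrom_pos _ _ _ (by rw [h1]; omega), hlen2]
  rw [phrasesFrom_nil _ _ _ (by rw [h1]; omega)]
  rfl
/-- For every integer `k ≥ 1` there is a binary string whose novLZ3 parsing has size `k`
and whose novLZ parsing has size `2k - 1`. -/
theorem exists_zNov3_half_zNov (k : ℕ) (hk : 1 ≤ k) :
    ∃ s : List (Fin 2), zNov3 s = k ∧ zNov s = 2 * k - 1 := by
  refine ⟨S k, zNov3_S k hk, ?_⟩
  rcases Nat.lt_or_ge k 3 with h | h
  · interval_cases k
    · simpa using zNov_S1
    · simpa using zNov_S2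
  · exact zNov_S k h
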